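/- Let n ≥ 2 and d ≥ 2, and let W be the span in EuclideanSpace ℂ (Fin n → Fin d) of the states {G_n^k : 0 ≤ k ≤ n(d−1)}. Then the n-qudit space decomposes as the orthogonal direct sum of: (i) the span of the two coordinate basis vectors e_{(0,…,0)} and e_{(d−1,…,d−1)}; (ii) the span of {G_n^k : 1 ≤ k ≤ n(d−1)−1}, which has finrank n(d−1) − 1 and all of whose nonzero vectors are GME; and (iii) the orthogonal complement Wᗮ, which has finrank d^n − n(d−1) − 1 and contains no nonzero fully product vector (a CES of the maximal possible dimension). -/

import Mathlib

open Finset Polynomial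

/-- The unnormalized `n`-qudit state `G_n^k`, the uniform superposition of all basis
vectors `|i₁⋯iₙ⟩` with `i₁ + ⋯ + iₙ = k`. -/
noncomputable def gState (n d k : ℕ) : EuclideanSpace ℂ (Fin n → Fin d) :=
  WithLp.toLp 2 (fun i => if (∑ j, ((i j : ℕ))) = k then 1 else 0)

/-- A vector of the `n`-qudit space is *fully product* if it is a simple tensor. -/
def FullyProduct {n d : ℕ} (ψ : EuclideanSpace ℂ (Fin n → Fin d)) : Prop :=
  ∃ φ : Fin n → Fin d → ℂ, ∀ i, ψ i = ∏ j, φ j (i j)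

/-- `ψ` is biseparable across the bipartition `(S, Sᶜ)` of the `n` qudits. -/
def Biseparable {n d : ℕ} (S : Set (Fin n))
    (ψ : EuclideanSpace ℂ (Fin n → Fin d)) : Prop :=
  ∃ (φ : ((j : S) → Fin d) → ℂ) (χ : ((j : ↥Sᶜ) → Fin d) → ℂ),
    ∀ i, ψ i = φ (fun j => i j.val) * χ (fun j => i j.val)

/-- A nonzero vector is genuinely multipartite entangled if it is not biseparable
across any nontrivial bipartition. -/
def GME {n d : ℕ} (ψ : EuclideanSpace ℂ (Fin n → Fin d)) : Prop :=
  ψ ≠ 0 ∧ ∀ S : Set (Fin n), S ≠ ∅ → S ≠ Set.univ → ¬ Biseparable S ψ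

/- ### Auxiliary lemmas -/

lemma gState_apply (n d k : ℕ) (i : Fin n → Fin d) :
    gState n d k i = if (∑ j, ((i j : ℕ))) = k then 1 else 0 := rfl

lemma sum_fin_le {d : ℕ} {ι : Type} [Fintype ι] (a : ι → Fin d) :
    ∑ j, ((a j : ℕ)) ≤ Fintype.card ι * (d - 1) := by
  calc ∑ j, ((a j : ℕ)) ≤ ∑ _j : ι, (d-1) := by
        apply Finset.sum_le_sum; intro j _; have := (a j).isLt; omega
    _ = Fintype.card ι * (d-1) := by simp [Finset.sum_const, mul_comm]

lemma exists_sum_fin (d : ℕ) (hd : 1 ≤ d) : ∀ (m s : ℕ), s ≤ m * (d - 1) →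
    ∃ a : Fin m → Fin d, ∑ j, ((a j : ℕ)) = s := by
  intro m
  induction m with
  | zero => intro s hs; simp at hs; exact ⟨fun j => j.elim0, by simp [hs]⟩
  | succ m ih =>
    intro s hs
    have hx : min s (d-1) < d := by omega
    have h2 : s - min s (d-1) ≤ m * (d-1) := by
      rcases Nat.le_total s (d-1) with h | h
      · simp [Nat.min_eq_left h]
      · have : min s (d-1) = d - 1 := Nat.min_eq_right h
        rw [this]; have := hs; rw [Nat.succ_mul] at this; omega
    obtain ⟨a, ha⟩ := ih _ h2
    refine ⟨Fin.cons ⟨min s (d-1), hx⟩ a, ?_⟩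
    rw [Fin.sum_univ_succ]
    simp only [Fin.cons_zero, Fin.cons_succ, ha]
    omega

lemma exists_sum_eq {d : ℕ} (hd : 1 ≤ d) (ι : Type) [Fintype ι] {s : ℕ}
    (hs : s ≤ Fintype.card ι * (d - 1)) : ∃ a : ι → Fin d, ∑ j, ((a j : ℕ)) = s := by
  obtain ⟨a, ha⟩ := exists_sum_fin d hd (Fintype.card ι) s hs
  classical
  obtain ⟨e⟩ := Fintype.truncEquivFin ι
  exact ⟨a ∘ e, by rw [← ha]; exact Fintype.sum_equiv e _ _ (fun j => rfl)⟩

lemma keyAux {d : ℕ} (hd : 2 ≤ d) {ι κ : Type} [Fintype ι] [Fintype κ] [Nonempty κ]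
    (φ : (ι → Fin d) → ℂ) (χ : (κ → Fin d) → ℂ)
    (K : ∀ a a' b b', (∑ j, ((a j : ℕ))) + (∑ j, ((b j : ℕ)))
        = (∑ j, ((a' j : ℕ))) + (∑ j, ((b' j : ℕ))) → φ a * χ b = φ a' * χ b')
    (hM : ∀ a b, (∑ j, ((a j : ℕ))) + (∑ j, ((b j : ℕ)))
        = Fintype.card ι * (d-1) + Fintype.card κ * (d-1) → φ a * χ b = 0)
    (amin : ι → Fin d) (hamin : φ amin ≠ 0) (hs0 : 1 ≤ ∑ j, ((amin j : ℕ)))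
    (hmin : ∀ a, φ a ≠ 0 → ∑ j, ((amin j : ℕ)) ≤ ∑ j, ((a j : ℕ)))
    (b0 : κ → Fin d) (hb0 : χ b0 ≠ 0) : False := by
  classical
  have hd1 : 1 ≤ d := by omega
  set S1 := Fintype.card ι * (d-1) with hS1
  set T1 := Fintype.card κ * (d-1) with hT1
  have hT1pos : 1 ≤ T1 := by
    have h1 : 1 ≤ Fintype.card κ := Fintype.card_pos
    have h2 : 1 ≤ d - 1 := by omega
    calc 1 = 1 * 1 := by ring
      _ ≤ Fintype.card κ * (d-1) := Nat.mul_le_mul h1 h2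
  have haminle : ∑ j, ((amin j : ℕ)) ≤ S1 := sum_fin_le amin
  have step1 : ∀ b, χ b ≠ 0 → ∑ j, ((b j : ℕ)) = T1 := by
    intro b hb
    by_contra hne
    have hlt : ∑ j, ((b j : ℕ)) < T1 := lt_of_le_of_ne (sum_fin_le b) hne
    obtain ⟨a', ha'⟩ := exists_sum_eq hd1 ι (s := ∑ j, ((amin j : ℕ)) - 1) (by omega)
    obtain ⟨b', hb'⟩ := exists_sum_eq hd1 κ (s := ∑ j, ((b j : ℕ)) + 1) (by omega)
    have hK := K a' amin b' b (by omega)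
    have : φ a' ≠ 0 := by
      intro h; rw [h, zero_mul] at hK; exact (mul_ne_zero hamin hb) hK.symm
    have := hmin a' this
    omega
  have hb0T : ∑ j, ((b0 j : ℕ)) = T1 := step1 b0 hb0
  have step3 : ∀ a, φ a ≠ 0 → ∑ j, ((a j : ℕ)) < S1 := by
    intro a ha
    rcases lt_or_eq_of_le (sum_fin_le a) with h | h
    · exact h
    · exact absurd (hM a b0 (by omega)) (mul_ne_zero ha hb0)
  obtain ⟨amax, hmem, hmax⟩ := Finset.exists_max_image (Finset.univ.filter (fun a => φ a ≠ 0))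
    (fun a => ∑ j, ((a j : ℕ))) ⟨amin, by simp [hamin]⟩
  have hamax : φ amax ≠ 0 := by simpa using hmem
  have hs1 : ∑ j, ((amax j : ℕ)) < S1 := step3 amax hamax
  obtain ⟨a', ha'⟩ := exists_sum_eq hd1 ι (s := ∑ j, ((amax j : ℕ)) + 1) (by omega)
  obtain ⟨b', hb'⟩ := exists_sum_eq hd1 κ (s := T1 - 1) (by omega)
  have hK := K a' amax b' b0 (by omega)
  have ha'ne : φ a' ≠ 0 := by
    intro h; rw [h, zero_mul] at hK; exact (mul_ne_zero hamax hb0) hK.symm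
  have := hmax a' (by simp [ha'ne])
  omega

lemma keyMain {d : ℕ} (hd : 2 ≤ d) {ι κ : Type} [Fintype ι] [Fintype κ] [Nonempty ι] [Nonempty κ]
    (φ : (ι → Fin d) → ℂ) (χ : (κ → Fin d) → ℂ)
    (K : ∀ a a' b b', (∑ j, ((a j : ℕ))) + (∑ j, ((b j : ℕ)))
        = (∑ j, ((a' j : ℕ))) + (∑ j, ((b' j : ℕ))) → φ a * χ b = φ a' * χ b')
    (h0 : ∀ a b, (∑ j, ((a j : ℕ))) + (∑ j, ((b j : ℕ))) = 0 → φ a * χ b = 0)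
    (hM : ∀ a b, (∑ j, ((a j : ℕ))) + (∑ j, ((b j : ℕ)))
        = Fintype.card ι * (d-1) + Fintype.card κ * (d-1) → φ a * χ b = 0)
    (a0 : ι → Fin d) (b0 : κ → Fin d) (h : φ a0 * χ b0 ≠ 0) : False := by
  classical
  have ha0 : φ a0 ≠ 0 := fun hh => h (by rw [hh, zero_mul])
  have hb0 : χ b0 ≠ 0 := fun hh => h (by rw [hh, mul_zero])
  obtain ⟨amin, hamem, hamin⟩ := Finset.exists_min_image (Finset.univ.filter (fun a => φ a ≠ 0))
    (fun a => ∑ j, ((a j : ℕ))) ⟨a0, by simp [ha0]⟩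
  obtain ⟨bmin, hbmem, hbmin⟩ := Finset.exists_min_image (Finset.univ.filter (fun b => χ b ≠ 0))
    (fun b => ∑ j, ((b j : ℕ))) ⟨b0, by simp [hb0]⟩
  have hamin' : φ amin ≠ 0 := by simpa using hamem
  have hbmin' : χ bmin ≠ 0 := by simpa using hbmem
  rcases Nat.eq_zero_or_pos (∑ j, ((amin j : ℕ))) with ha | ha
  · rcases Nat.eq_zero_or_pos (∑ j, ((bmin j : ℕ))) with hb | hb
    · exact (mul_ne_zero hamin' hbmin') (h0 amin bmin (by omega))
    · exact keyAux hd χ φ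
        (fun b b' a a' hh => by
          rw [mul_comm, mul_comm (χ b')]; exact K a a' b b' (by omega))
        (fun b a hh => by rw [mul_comm]; exact hM a b (by omega))
        bmin hbmin' hb (fun b hbne => hbmin b (by simp [hbne])) a0 ha0
  · exact keyAux hd φ χ K hM amin hamin' ha
      (fun a hane => hamin a (by simp [hane])) b0 hb0

lemma sum_split {n : ℕ} (S : Set (Fin n)) [Fintype ↥S] [Fintype ↥Sᶜ] [DecidablePred (· ∈ S)]
    (f : Fin n → ℕ) :
    ∑ j, f j = (∑ j : ↥S, f j.val) + ∑ j : ↥Sᶜ, f j.val := by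
  classical
  rw [← Finset.sum_add_sum_compl S.toFinset f]
  congr 1
  · exact Finset.sum_subtype S.toFinset (fun x => Set.mem_toFinset) f
  · refine Finset.sum_subtype S.toFinsetᶜ (fun x => ?_) f
    simp [Set.mem_toFinset]

lemma B_levels {n d : ℕ} {ψ : EuclideanSpace ℂ (Fin n → Fin d)}
    (hψ : ψ ∈ Submodule.span ℂ
      {v | ∃ k, 1 ≤ k ∧ k ≤ n * (d-1) - 1 ∧ v = gState n d k}) :
    (∀ i i', (∑ j, ((i j : ℕ))) = (∑ j, ((i' j : ℕ))) → ψ i = ψ i') ∧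
    (∀ i, (∑ j, ((i j : ℕ))) = 0 → ψ i = 0) ∧
    (∀ i, (∑ j, ((i j : ℕ))) = n * (d-1) → ψ i = 0) := by
  induction hψ using Submodule.span_induction with
  | mem x hx =>
    obtain ⟨k, hk1, hk2, rfl⟩ := hx
    refine ⟨fun i i' h => by rw [gState_apply, gState_apply, h], fun i h => ?_, fun i h => ?_⟩
    · rw [gState_apply, if_neg]; omega
    · rw [gState_apply, if_neg]; omega
  | zero => exact ⟨fun _ _ _ => rfl, fun _ _ => rfl, fun _ _ => rfl⟩
  | add x y hx hy ihx ihy =>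
    refine ⟨fun i i' h => ?_, fun i h => ?_, fun i h => ?_⟩ <;>
      simp only [PiLp.add_apply]
    · rw [ihx.1 i i' h, ihy.1 i i' h]
    · rw [ihx.2.1 i h, ihy.2.1 i h, add_zero]
    · rw [ihx.2.2 i h, ihy.2.2 i h, add_zero]
  | smul a x hx ihx =>
    refine ⟨fun i i' h => ?_, fun i h => ?_, fun i h => ?_⟩ <;>
      simp only [PiLp.smul_apply, smul_eq_mul]
    · rw [ihx.1 i i' h]
    · rw [ihx.2.1 i h, mul_zero]
    · rw [ihx.2.2 i h, mul_zero]

lemma B_gme {n d : ℕ} (hn : 2 ≤ n) (hd : 2 ≤ d) (ψ : EuclideanSpace ℂ (Fin n → Fin d))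
    (hconst : ∀ i i', (∑ j, ((i j : ℕ))) = (∑ j, ((i' j : ℕ))) → ψ i = ψ i')
    (hzero : ∀ i, (∑ j, ((i j : ℕ))) = 0 → ψ i = 0)
    (htop : ∀ i, (∑ j, ((i j : ℕ))) = n * (d-1) → ψ i = 0)
    (hψ : ψ ≠ 0) : GME ψ := by
  refine ⟨hψ, fun S hSne hSuniv hbisep => ?_⟩
  obtain ⟨φ, χ, hsep⟩ := hbisep
  classical
  haveI : Nonempty ↥S := (Set.nonempty_iff_ne_empty.mpr hSne).to_subtype
  haveI : Nonempty ↥Sᶜ := (Set.nonempty_compl.mpr hSuniv).to_subtype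
  have hcard : Fintype.card ↥S + Fintype.card ↥Sᶜ = n := by
    rw [← Set.toFinset_card, ← Set.toFinset_card, Set.toFinset_compl,
      Finset.card_add_card_compl]
    simp
  set comb : ((j : S) → Fin d) → ((j : ↥Sᶜ) → Fin d) → (Fin n → Fin d) :=
    fun a b j => if h : j ∈ S then a ⟨j, h⟩ else b ⟨j, h⟩ with hcomb
  have hval : ∀ a b, ψ (comb a b) = φ a * χ b := by
    intro a b
    rw [hsep (comb a b)]
    congr 1
    · congr 1; funext j; simp only [hcomb, j.2, dif_pos]
    · congr 1; funext j
      have hj : ¬ (j.val ∈ S) := j.2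
      simp only [hcomb, hj, dif_neg, not_false_iff]
  have hsum : ∀ a b, (∑ j, ((comb a b j : ℕ)))
      = (∑ j : ↥S, ((a j : ℕ))) + ∑ j : ↥Sᶜ, ((b j : ℕ)) := by
    intro a b
    rw [sum_split S (fun j => ((comb a b j : ℕ)))]
    congr 1
    · apply Finset.sum_congr rfl; intro j _
      simp only [hcomb, j.2, dif_pos]
    · apply Finset.sum_congr rfl; intro j _
      have hj : ¬ (j.val ∈ S) := j.2
      simp only [hcomb, hj, dif_neg, not_false_iff]
  obtain ⟨i0, hi0⟩ : ∃ i, ψ i ≠ 0 := by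
    by_contra h'
    push_neg at h'
    exact hψ (PiLp.ext fun i => by simpa using h' i)
  refine keyMain hd φ χ ?_ ?_ ?_ (fun j : ↥S => i0 j.val) (fun j : ↥Sᶜ => i0 j.val)
    (by rw [← hsep i0]; exact hi0)
  · intro a a' b b' h
    rw [← hval a b, ← hval a' b']
    exact hconst _ _ (by rw [hsum, hsum]; exact h)
  · intro a b h
    rw [← hval a b]
    exact hzero _ (by rw [hsum]; exact h)
  · intro a b h
    rw [← hval a b]
    apply htop
    rw [hsum, h, ← add_mul, hcard]

lemma ces_no_product {n d : ℕ} (hn : 2 ≤ n) (hd : 2 ≤ d)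
    (ψ : EuclideanSpace ℂ (Fin n → Fin d))
    (horth : ∀ k ≤ n * (d-1), ∑ i : Fin n → Fin d,
      (if (∑ j, ((i j : ℕ))) = k then ψ i else 0) = 0)
    (hprod : FullyProduct ψ) : ψ = 0 := by
  obtain ⟨φ, hφ⟩ := hprod
  classical
  set p : Fin n → ℂ[X] := fun j => ∑ x : Fin d, C (φ j x) * X ^ (x : ℕ) with hp
  have hexp : ∏ j, p j = ∑ i : Fin n → Fin d, C (ψ i) * X ^ (∑ j, ((i j : ℕ))) := by
    rw [hp]
    simp only
    rw [Finset.prod_univ_sum, Fintype.piFinset_univ]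
    apply Finset.sum_congr rfl
    intro i _
    rw [Finset.prod_mul_distrib, ← map_prod, Finset.prod_pow_eq_pow_sum, ← hφ i]
  have hzero : ∏ j, p j = 0 := by
    rw [hexp]
    apply Polynomial.ext
    intro k
    rw [Polynomial.finset_sum_coeff, Polynomial.coeff_zero]
    have hterm : ∀ i : Fin n → Fin d,
        (C (ψ i) * X ^ (∑ j, ((i j : ℕ)))).coeff k
        = if (∑ j, ((i j : ℕ))) = k then ψ i else 0 := by
      intro i
      rw [Polynomial.coeff_C_mul, Polynomial.coeff_X_pow]
      split_ifs with h1 h2 h2 <;> simp_all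
    rw [Finset.sum_congr rfl (fun i _ => hterm i)]
    by_cases hk : k ≤ n * (d-1)
    · exact horth k hk
    · apply Finset.sum_eq_zero
      intro i _
      rw [if_neg]
      intro he
      have : ∑ j, ((i j : ℕ)) ≤ Fintype.card (Fin n) * (d-1) := sum_fin_le i
      rw [Fintype.card_fin] at this
      omega
  obtain ⟨j, _, hj⟩ := Finset.prod_eq_zero_iff.mp hzero
  have hφj : ∀ x : Fin d, φ j x = 0 := by
    intro x
    have hc : (p j).coeff (x : ℕ) = 0 := by rw [hj]; simp
    rw [hp] at hc
    simp only at hc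
    rw [Polynomial.finset_sum_coeff, Finset.sum_eq_single x] at hc
    · simpa using hc
    · intro y _ hy
      rw [Polynomial.coeff_C_mul, Polynomial.coeff_X_pow, if_neg, mul_zero]
      exact fun he => hy (Fin.ext he.symm)
    · intro hx; exact absurd (Finset.mem_univ x) hx
  refine PiLp.ext fun i => ?_
  rw [hφ i]
  exact Finset.prod_eq_zero (Finset.mem_univ j) (hφj (i j))

lemma gState_inner_zero {n d k k' : ℕ} (h : k ≠ k') :
    (inner ℂ (gState n d k) (gState n d k') : ℂ) = 0 := by
  rw [PiLp.inner_apply]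
  apply Finset.sum_eq_zero
  intro i _
  rw [RCLike.inner_apply, gState_apply, gState_apply]
  split_ifs with h1 h2 <;> simp_all

lemma single_zero_eq (n d : ℕ) (h0 : 0 < d) :
    EuclideanSpace.single (fun _ => (⟨0, h0⟩ : Fin d)) (1 : ℂ) = gState n d 0 := by
  refine PiLp.ext fun i => ?_
  rw [EuclideanSpace.single_apply, gState_apply]
  by_cases h : (∑ j, ((i j : ℕ))) = 0
  · rw [if_pos h, if_pos]
    funext j
    exact Fin.ext (Finset.sum_eq_zero_iff.mp h j (Finset.mem_univ j))
  · rw [if_neg h, if_neg]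
    intro he
    apply h
    rw [he]
    simp

lemma single_top_eq (n d : ℕ) (hdm : d - 1 < d) :
    EuclideanSpace.single (fun _ => (⟨d - 1, hdm⟩ : Fin d)) (1 : ℂ)
      = gState n d (n * (d-1)) := by
  refine PiLp.ext fun i => ?_
  rw [EuclideanSpace.single_apply, gState_apply]
  by_cases h : (∑ j, ((i j : ℕ))) = n * (d - 1)
  · rw [if_pos h, if_pos]
    funext j
    by_contra hj
    have hjlt : (i j : ℕ) < d - 1 := by
      have h1 := (i j).isLt
      have h2 : (i j : ℕ) ≠ d - 1 := fun he => hj (Fin.ext he)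
      omega
    have hlt : (∑ j, ((i j : ℕ))) < ∑ _j : Fin n, (d - 1) :=
      Finset.sum_lt_sum (fun m _ => by have := (i m).isLt; omega)
        ⟨j, Finset.mem_univ j, hjlt⟩
    rw [Finset.sum_const, Finset.card_univ, Fintype.card_fin, smul_eq_mul] at hlt
    omega
  · rw [if_neg h, if_neg]
    intro he
    apply h
    rw [he]
    simp [mul_comm]

lemma gState_indep (n d : ℕ) (hd : 2 ≤ d) (N : ℕ) (f : ℕ → ℕ)
    (hf : ∀ m : Fin N, f m ≤ n * (d-1))
    (hinj : ∀ m m' : Fin N, f (m : ℕ) = f (m' : ℕ) → m = m') :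
    LinearIndependent ℂ (fun m : Fin N => gState n d (f m)) := by
  rw [Fintype.linearIndependent_iff]
  intro c hc m
  obtain ⟨i, hi⟩ : ∃ i : Fin n → Fin d, ∑ j, ((i j : ℕ)) = f (m : ℕ) := by
    apply exists_sum_eq (d := d) (by omega) (Fin n)
    have := hf m
    simpa using this
  have key : ∑ m' : Fin N, (c m' • gState n d (f (m' : ℕ))) i = 0 := by
    calc ∑ m' : Fin N, (c m' • gState n d (f (m' : ℕ))) i
        = (∑ m' : Fin N, c m' • gState n d (f (m' : ℕ))) i :=
          by rw [WithLp.ofLp_sum, Finset.sum_apply]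
      _ = 0 := by rw [hc]; rfl
  have h2 : ∀ m' : Fin N, (c m' • gState n d (f (m' : ℕ))) i = if m' = m then c m else 0 := by
    intro m'
    rw [PiLp.smul_apply, gState_apply, smul_eq_mul, hi]
    by_cases he : m' = m
    · subst he; simp
    · have hne : f (m : ℕ) ≠ f (m' : ℕ) := fun hh => he (hinj m' m hh.symm)
      rw [if_neg hne, if_neg he, mul_zero]
  rw [Finset.sum_congr rfl (fun m' _ => h2 m')] at key
  simpa using key

/- ### Main theorem -/

/-- Theorem 6: the `n`-qudit Hilbert space decomposes as the orthogonal direct sum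
`span{|0…0⟩, |d−1 … d−1⟩} ⊕ GES_{n(d−1)−1} ⊕ CES_{d^n − n(d−1) − 1}`, the last
summand being a completely entangled subspace of the maximal possible dimension. -/
theorem nqudit_segre_veronese_decomposition (n d : ℕ) (hn : 2 ≤ n) (hd : 2 ≤ d)
    (W : Submodule ℂ (EuclideanSpace ℂ (Fin n → Fin d)))
    (hW : W = Submodule.span ℂ {v | ∃ k ≤ n * (d - 1), v = gState n d k})
    (A : Submodule ℂ (EuclideanSpace ℂ (Fin n → Fin d)))
    (hA : A = Submodule.span ℂ
        {EuclideanSpace.single (fun _ => (⟨0, by omega⟩ : Fin d)) (1 : ℂ),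
         EuclideanSpace.single (fun _ => (⟨d - 1, by omega⟩ : Fin d)) (1 : ℂ)})
    (B : Submodule ℂ (EuclideanSpace ℂ (Fin n → Fin d)))
    (hB : B = Submodule.span ℂ
        {v | ∃ k, 1 ≤ k ∧ k ≤ n * (d - 1) - 1 ∧ v = gState n d k}) :
    Submodule.IsOrtho A B ∧ Submodule.IsOrtho A Wᗮ ∧ Submodule.IsOrtho B Wᗮ ∧
    A ⊔ B ⊔ Wᗮ = ⊤ ∧
    Module.finrank ℂ ↥B = n * (d - 1) - 1 ∧
    (∀ ψ ∈ B, ψ ≠ 0 → GME ψ) ∧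
    Module.finrank ℂ ↥(Wᗮ) = d ^ n - n * (d - 1) - 1 ∧
    (∀ ψ ∈ Wᗮ, FullyProduct ψ → ψ = 0) := by
  have hM2 : 2 ≤ n * (d - 1) := by
    calc 2 = 2 * 1 := by ring
      _ ≤ n * (d - 1) := Nat.mul_le_mul hn (by omega)
  set M := n * (d - 1) with hMdef
  -- rewrite the generators of A
  have hA' : A = Submodule.span ℂ {gState n d 0, gState n d M} := by
    rw [hA, single_zero_eq n d (by omega), single_top_eq n d (by omega)]
  -- A and B are contained in W
  have hAW : A ≤ W := by
    rw [hA', hW]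
    apply Submodule.span_mono
    rintro v (rfl | rfl)
    · exact ⟨0, by omega, rfl⟩
    · exact ⟨M, le_rfl, rfl⟩
  have hBW : B ≤ W := by
    rw [hB, hW]
    apply Submodule.span_mono
    rintro v ⟨k, hk1, hk2, rfl⟩
    exact ⟨k, by omega, rfl⟩
  -- orthogonality statements
  have hAB : Submodule.IsOrtho A B := by
    rw [hA', hB]
    rw [Submodule.isOrtho_span]
    rintro u (rfl | rfl) v ⟨k, hk1, hk2, rfl⟩
    · exact gState_inner_zero (by omega)
    · exact gState_inner_zero (by omega)
  have hAWp : Submodule.IsOrtho A Wᗮ := (W.isOrtho_orthogonal_right).mono_left hAW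
  have hBWp : Submodule.IsOrtho B Wᗮ := (W.isOrtho_orthogonal_right).mono_left hBW
  -- A ⊔ B = W
  have hABeqW : A ⊔ B = W := by
    rw [hA', hB, hW, ← Submodule.span_union]
    congr 1
    ext v
    constructor
    · rintro ((rfl | rfl) | ⟨k, hk1, hk2, rfl⟩)
      · exact ⟨0, by omega, rfl⟩
      · exact ⟨M, le_rfl, rfl⟩
      · exact ⟨k, by omega, rfl⟩
    · rintro ⟨k, hk, rfl⟩
      by_cases h0 : k = 0
      · subst h0; exact Or.inl (Or.inl rfl)
      · by_cases hM : k = M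
        · subst hM; exact Or.inl (Or.inr rfl)
        · exact Or.inr ⟨k, by omega, by omega, rfl⟩
  -- finrank of W
  have hWrank : Module.finrank ℂ ↥W = M + 1 := by
    have hindep := gState_indep n d hd (M + 1) (fun k => k)
      (fun m => by show (m : ℕ) ≤ n * (d-1); have := m.isLt; omega)
      (fun m m' h => Fin.ext h)
    have hrange : Set.range (fun m : Fin (M+1) => gState n d ((fun k => k) (m : ℕ)))
        = {v | ∃ k ≤ M, v = gState n d k} := by
      ext v
      simp only [Set.mem_range, Set.mem_setOf_eq]
      constructor
      · rintro ⟨m, rfl⟩; exact ⟨(m : ℕ), by have := m.isLt; omega, rfl⟩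
      · rintro ⟨k, hk, rfl⟩; exact ⟨⟨k, by omega⟩, rfl⟩
    rw [hW, ← hrange, finrank_span_eq_card hindep, Fintype.card_fin]
  -- finrank of B
  have hBrank : Module.finrank ℂ ↥B = M - 1 := by
    have hindep := gState_indep n d hd (M - 1) (fun k => k + 1)
      (fun m => by show (m : ℕ) + 1 ≤ n * (d-1); have := m.isLt; omega)
      (fun m m' h => by
        have h' : (m : ℕ) + 1 = (m' : ℕ) + 1 := h
        exact Fin.ext (by omega))
    have hrange : Set.range (fun m : Fin (M-1) => gState n d ((fun k => k + 1) (m : ℕ)))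
        = {v | ∃ k, 1 ≤ k ∧ k ≤ M - 1 ∧ v = gState n d k} := by
      ext v
      simp only [Set.mem_range, Set.mem_setOf_eq]
      constructor
      · rintro ⟨m, rfl⟩
        exact ⟨(m : ℕ) + 1, by omega, by have := m.isLt; omega, rfl⟩
      · rintro ⟨k, hk1, hk2, rfl⟩
        exact ⟨⟨k - 1, by omega⟩, by
          have : k - 1 + 1 = k := by omega
          simp only [this]⟩
    rw [hB, ← hrange, finrank_span_eq_card hindep, Fintype.card_fin]
  -- full space finrank
  have hErank : Module.finrank ℂ (EuclideanSpace ℂ (Fin n → Fin d)) = d ^ n := by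
    rw [finrank_euclideanSpace]
    simp [Fintype.card_fun]
  have hWprank : Module.finrank ℂ ↥(Wᗮ) = d ^ n - M - 1 := by
    have h := Submodule.finrank_add_finrank_orthogonal W
    rw [hWrank, hErank] at h
    omega
  refine ⟨hAB, hAWp, hBWp, ?_, hBrank, ?_, hWprank, ?_⟩
  · rw [hABeqW, Submodule.sup_orthogonal_of_hasOrthogonalProjection]
  · intro ψ hψ hψne
    rw [hB] at hψ
    obtain ⟨h1, h2, h3⟩ := B_levels hψ
    exact B_gme hn hd ψ h1 h2 h3 hψne
  · intro ψ hψ hfp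
    apply ces_no_product hn hd ψ ?_ hfp
    intro k hk
    have hg : gState n d k ∈ W := by
      rw [hW]; exact Submodule.subset_span ⟨k, hk, rfl⟩
    have h1 := (Submodule.mem_orthogonal W ψ).mp hψ (gState n d k) hg
    rw [PiLp.inner_apply] at h1
    refine Eq.trans ?_ h1
    apply Finset.sum_congr rfl
    intro i _
    rw [RCLike.inner_apply, gState_apply]
    split_ifs <;> simp
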